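/- Let G be a finite group with subgroups A, B, M satisfying: |A| = |B| = |M| = nk, |G| = n³k with k = |A∩B|, AM and BM are subgroups of order n²k, and G = AMB. If a ∈ A, b ∈ B and the commutator [a,b] = a⁻¹b⁻¹ab lies in AM \ A, then ab ≠ b'a' for all b' ∈ B and a' ∈ A. -/
import Mathlib


open scoped Pointwise

/-- The image of a subgroup `H` in `G ⧸ K` is in bijection with
`H ⧸ K.subgroupOf H`. -/
noncomputable def quotImgEquiv {G : Type*} [Group G] (H K : Subgroup G) :
    (H ⧸ K.subgroupOf H) ≃ ((QuotientGroup.mk : G → G ⧸ K) '' (H : Set G)) := by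
  refine Equiv.ofBijective
    (Quotient.lift (fun h : H =>
        (⟨((h : G) : G ⧸ K), ⟨(h : G), h.2, rfl⟩⟩ :
          ((QuotientGroup.mk : G → G ⧸ K) '' (H : Set G))))
      ?_) ⟨?_, ?_⟩
  · intro x y hxy
    have hx : (x : G)⁻¹ * (y : G) ∈ K := by
      have := (QuotientGroup.leftRel_apply).mp hxy
      simpa [Subgroup.mem_subgroupOf] using this
    exact Subtype.ext ((QuotientGroup.eq).mpr hx)
  · intro x y hxy
    induction x using Quotient.inductionOn with
    | h x =>
    induction y using Quotient.inductionOn with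
    | h y =>
    have : ((x : G) : G ⧸ K) = ((y : G) : G ⧸ K) := congrArg Subtype.val hxy
    have hK : (x : G)⁻¹ * (y : G) ∈ K := (QuotientGroup.eq).mp this
    exact Quotient.sound ((QuotientGroup.leftRel_apply).mpr
      (by simpa [Subgroup.mem_subgroupOf] using hK))
  · rintro ⟨q, g, hg, rfl⟩
    exact ⟨Quotient.mk'' ⟨g, hg⟩, rfl⟩

/-- `K.subgroupOf H` is in bijection with `H ⊓ K`. -/
def subgroupOfEquivInf {G : Type*} [Group G] (H K : Subgroup G) :
    (K.subgroupOf H) ≃ (H ⊓ K : Subgroup G) where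
  toFun x := ⟨(x : H), (x : H).2, x.2⟩
  invFun x := ⟨⟨(x : G), x.2.1⟩, x.2.2⟩
  left_inv x := rfl
  right_inv x := rfl

/-- Product formula: `|H·K| · |H ⊓ K| = |H| · |K|` for subgroups of a finite group. -/
theorem card_mul_inf {G : Type*} [Group G] [Finite G] (H K : Subgroup G) :
    Nat.card ((H : Set G) * (K : Set G)) * Nat.card (H ⊓ K : Subgroup G) =
      Nat.card H * Nat.card K := by
  rw [Subgroup.card_mul_eq_card_subgroup_mul_card_quotient K (H : Set G)]
  have h1 : Nat.card ((H : Set G).image ((↑) : G → G ⧸ K)) =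
      Nat.card (H ⧸ K.subgroupOf H) := (Nat.card_congr (quotImgEquiv H K)).symm
  have h2 : Nat.card (K.subgroupOf H) = Nat.card (H ⊓ K : Subgroup G) :=
    Nat.card_congr (subgroupOfEquivInf H K)
  have h3 : Nat.card H = Nat.card (H ⧸ K.subgroupOf H) * Nat.card (K.subgroupOf H) :=
    Subgroup.card_eq_card_quotient_mul_card_subgroup _
  rw [h1, h3, h2]
  ring

/-- Under conditions (1)–(3), if `a ∈ A`, `b ∈ B` and the commutator `a⁻¹b⁻¹ab`
lies in `AM \ A`, then `ab ≠ b'a'` for all `b' ∈ B`, `a' ∈ A`. -/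
theorem stmt2 {G : Type*} [Group G] [Finite G]
    (A B M AM BM : Subgroup G) (n k : ℕ) (hn : 1 < n)
    (hk : k = Nat.card (A ⊓ B : Subgroup G))
    (hA : Nat.card A = n * k) (hB : Nat.card B = n * k) (hM : Nat.card M = n * k)
    (hG : Nat.card G = n ^ 3 * k)
    (hAM : (AM : Set G) = (A : Set G) * (M : Set G))
    (hBM : (BM : Set G) = (B : Set G) * (M : Set G))
    (hAMcard : Nat.card AM = n ^ 2 * k) (hBMcard : Nat.card BM = n ^ 2 * k)
    (h3 : ∀ g : G, ∃ a ∈ A, ∃ m ∈ M, ∃ b ∈ B, g = a * m * b)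
    (a : G) (haA : a ∈ A) (b : G) (hbB : b ∈ B)
    (hcomm : a⁻¹ * b⁻¹ * a * b ∈ AM ∧ a⁻¹ * b⁻¹ * a * b ∉ A) :
    ∀ b' ∈ B, ∀ a' ∈ A, a * b ≠ b' * a' := by
  -- A ≤ AM
  have hALe : A ≤ AM := by
    intro x hx
    have : x ∈ (AM : Set G) := by
      rw [hAM]
      exact ⟨x, hx, 1, M.one_mem, mul_one x⟩
    exact this
  -- AM * B = univ
  have hUniv : (AM : Set G) * (B : Set G) = Set.univ := by
    apply Set.eq_univ_of_forall
    intro g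
    obtain ⟨x, hx, m, hm, y, hy, rfl⟩ := h3 g
    refine ⟨x * m, ?_, y, hy, rfl⟩
    show x * m ∈ (AM : Set G)
    rw [hAM]
    exact ⟨x, hx, m, hm, rfl⟩
  -- |AM ⊓ B| = k
  have hprod := card_mul_inf AM B
  rw [hUniv, hAMcard, hB] at hprod
  have hGcard : Nat.card (Set.univ : Set G) = n ^ 3 * k := by
    rw [Nat.card_congr (Equiv.Set.univ G), hG]
  rw [hGcard] at hprod
  have hk0 : 0 < k := hk ▸ Nat.card_pos
  have hn3k : 0 < n ^ 3 * k := by positivity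
  have hInfCard : Nat.card (AM ⊓ B : Subgroup G) = k := by
    have : n ^ 3 * k * Nat.card (AM ⊓ B : Subgroup G) = n ^ 3 * k * k := by
      rw [hprod]; ring
    exact Nat.eq_of_mul_eq_mul_left hn3k this
  -- AM ⊓ B = A ⊓ B
  have hinf : A ⊓ B = AM ⊓ B := by
    apply Subgroup.eq_of_le_of_card_ge
    · exact inf_le_inf_right B hALe
    · rw [hInfCard, ← hk]
  -- final contradiction
  intro b' hb' a' ha' heq
  set c := a⁻¹ * b⁻¹ * a * b with hc
  have hbb' : b⁻¹ * b' = a * c * a'⁻¹ := by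
    rw [hc, show a * (a⁻¹ * b⁻¹ * a * b) * a'⁻¹ = b⁻¹ * (a * b) * a'⁻¹ by group, heq]
    group
  have hbb'AM : b⁻¹ * b' ∈ AM := by
    rw [hbb']
    exact AM.mul_mem (AM.mul_mem (hALe haA) hcomm.1) (AM.inv_mem (hALe ha'))
  have hbb'B : b⁻¹ * b' ∈ B := B.mul_mem (B.inv_mem hbB) hb'
  have hbb'A : b⁻¹ * b' ∈ A := by
    have : b⁻¹ * b' ∈ A ⊓ B := hinf ▸ (Subgroup.mem_inf.mpr ⟨hbb'AM, hbb'B⟩)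
    exact this.1
  apply hcomm.2
  have hceq : c = a⁻¹ * (b⁻¹ * b') * a' := by
    rw [hbb']; group
  rw [hceq]
  exact A.mul_mem (A.mul_mem (A.inv_mem haA) hbb'A) ha'
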